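/- Let V be a type, let H = ℓ²(V, ℂ) be the Hilbert space of square-summable functions f : V → ℂ with norm ‖f‖ = (∑_{v∈V} |f(v)|²)^{1/2}, let P ⊆ H be a finite-dimensional linear subspace, and let U ⊆ V. Then U is a uniqueness set for P (i.e., any two elements of P that agree at every point of U are equal) if and only if there exists a constant C > 0 such that for every f ∈ P the Plancherel–Polya inequalities (∑_{u∈U} |f(u)|²)^{1/2} ≤ ‖f‖ ≤ C·(∑_{u∈U} |f(u)|²)^{1/2} hold. -/

import Mathlib

open scoped ENNReal

section aux
variable {V : Type*} (U : Set V)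

private lemma pp_two_toReal : (2 : ℝ≥0∞).toReal = 2 := by norm_num

private lemma pp_rpow_two (x : ℝ) : x ^ ((2 : ℝ≥0∞).toReal) = x ^ 2 := by
  rw [pp_two_toReal, show (2:ℝ) = ((2:ℕ):ℝ) by norm_num, Real.rpow_natCast]

private lemma pp_mem (f : lp (fun _ : V => ℂ) 2) : Memℓp (fun u : U => (f : ∀ _ : V, ℂ) u) 2 := by
  apply memℓp_gen
  have hs : Summable fun v : V => ‖(f : ∀ _ : V, ℂ) v‖ ^ (2 : ℝ≥0∞).toReal :=
    (lp.memℓp f).summable (by norm_num)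
  exact hs.subtype U

/-- restriction as a linear map -/
private noncomputable def ppR : lp (fun _ : V => ℂ) 2 →ₗ[ℂ] lp (fun _ : U => ℂ) 2 where
  toFun f := ⟨fun u => (f : ∀ _ : V, ℂ) u, pp_mem U f⟩
  map_add' f g := by
    ext u
    simp [lp.coeFn_add]
    rfl
  map_smul' c f := by
    ext u
    simp [lp.coeFn_smul]

private lemma ppR_norm (f : lp (fun _ : V => ℂ) 2) :
    ‖ppR U f‖ = Real.sqrt (∑' u : U, ‖(f : ∀ _ : V, ℂ) u‖ ^ 2) := by
  rw [lp.norm_eq_tsum_rpow (by norm_num) (ppR U f), Real.sqrt_eq_rpow, pp_two_toReal]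
  congr 1
  exact tsum_congr fun u => by
      rw [show ((ppR U f : lp (fun _ : U => ℂ) 2) : ∀ _ : U, ℂ) u = (f : ∀ _ : V, ℂ) u from rfl,
        show (2:ℝ) = ((2:ℕ):ℝ) by norm_num, Real.rpow_natCast]

private lemma pp_sum_eq (f : lp (fun _ : V => ℂ) 2) :
    (∑' v : V, ‖(f : ∀ _ : V, ℂ) v‖ ^ 2) = ‖f‖ ^ 2 := by
  have := lp.norm_rpow_eq_tsum (p := 2) (by norm_num) f
  simp only [pp_rpow_two] at this
  exact this.symm

private lemma pp_summable (f : lp (fun _ : V => ℂ) 2) :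
    Summable fun v : V => ‖(f : ∀ _ : V, ℂ) v‖ ^ 2 := by
  have := (lp.memℓp f).summable (p := 2) (by norm_num)
  simpa only [pp_rpow_two] using this

private lemma ppR_le (f : lp (fun _ : V => ℂ) 2) : ‖ppR U f‖ ≤ ‖f‖ := by
  rw [ppR_norm]
  have h1 : (∑' u : U, ‖(f : ∀ _ : V, ℂ) u‖ ^ 2) ≤ ∑' v : V, ‖(f : ∀ _ : V, ℂ) v‖ ^ 2 :=
    Summable.tsum_subtype_le _ U (fun v => sq_nonneg _) (pp_summable f)
  calc Real.sqrt (∑' u : U, ‖(f : ∀ _ : V, ℂ) u‖ ^ 2)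
      ≤ Real.sqrt (∑' v : V, ‖(f : ∀ _ : V, ℂ) v‖ ^ 2) := Real.sqrt_le_sqrt h1
    _ = ‖f‖ := by rw [pp_sum_eq, Real.sqrt_sq (norm_nonneg f)]

end aux

set_option maxHeartbeats 1000000 in
/-- For a finite-dimensional subspace `P` of `ℓ²(V, ℂ)` and a set `U ⊆ V`,
`U` is a uniqueness set for `P` iff the Plancherel–Polya inequalities hold on `P`. -/
theorem uniqueness_iff_plancherel_polya {V : Type*}
    (P : Submodule ℂ (lp (fun _ : V => ℂ) 2)) [FiniteDimensional ℂ P] (U : Set V) :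
    (∀ f ∈ P, ∀ g ∈ P, (∀ u ∈ U, (f : ∀ _ : V, ℂ) u = (g : ∀ _ : V, ℂ) u) → f = g) ↔
      ∃ C : ℝ, 0 < C ∧ ∀ f ∈ P,
        Real.sqrt (∑' u : U, ‖(f : ∀ _ : V, ℂ) u‖ ^ 2) ≤ ‖f‖ ∧
        ‖f‖ ≤ C * Real.sqrt (∑' u : U, ‖(f : ∀ _ : V, ℂ) u‖ ^ 2) := by
  constructor
  · intro huniq
    classical
    set T : P →L[ℂ] lp (fun _ : U => ℂ) 2 :=
      ((ppR U).mkContinuous 1 (fun f => by simpa using ppR_le U f)).comp (Submodule.subtypeL P)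
      with hTdef
    have hT : ∀ x : P, T x = ppR U (x : lp (fun _ : V => ℂ) 2) := fun _ => rfl
    have hinj : ∀ x : P, T x = 0 → x = 0 := by
      intro x hx
      have hx' : ∀ u ∈ U, ((x : lp (fun _ : V => ℂ) 2) : ∀ _ : V, ℂ) u
          = (((0 : lp (fun _ : V => ℂ) 2)) : ∀ _ : V, ℂ) u := by
        intro u hu
        have h1 : ((T x : lp (fun _ : U => ℂ) 2) : ∀ _ : U, ℂ) ⟨u, hu⟩
            = (((0 : lp (fun _ : U => ℂ) 2)) : ∀ _ : U, ℂ) ⟨u, hu⟩ := by rw [hx]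
        exact h1
      have := huniq x x.2 0 P.zero_mem hx'
      exact Subtype.ext this
    rcases Classical.em (∀ x : P, x = (0 : P)) with htriv | htriv
    · refine ⟨1, one_pos, ?_⟩
      intro f hf
      have hf0 : f = 0 := congrArg Subtype.val (htriv ⟨f, hf⟩)
      subst hf0
      simp [lp.coeFn_zero]
    · push_neg at htriv
      obtain ⟨x0, hx0⟩ := htriv
      have hsph : (Metric.sphere (0 : P) 1).Nonempty := by
        refine ⟨((‖x0‖⁻¹ : ℝ) : ℂ) • x0, ?_⟩
        have hx0n : ‖x0‖ ≠ 0 := norm_ne_zero_iff.mpr hx0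
        rw [mem_sphere_zero_iff_norm, norm_smul, Complex.norm_real, Real.norm_eq_abs,
          abs_of_nonneg (inv_nonneg.mpr (norm_nonneg x0))]
        exact inv_mul_cancel₀ hx0n
      obtain ⟨x, hxs, hmin⟩ := (isCompact_sphere (0 : P) 1).exists_isMinOn hsph
        ((continuous_norm.comp T.continuous).continuousOn)
      have hx1 : ‖x‖ = 1 := mem_sphere_zero_iff_norm.mp hxs
      have hm : 0 < ‖T x‖ := by
        rcases (norm_nonneg (T x)).lt_or_eq with h | h
        · exact h
        · exfalso
          have : T x = 0 := norm_eq_zero.mp h.symm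
          have := hinj x this
          rw [this] at hx1
          simp at hx1
      refine ⟨‖T x‖⁻¹, inv_pos.mpr hm, ?_⟩
      intro f hf
      refine ⟨by rw [← ppR_norm]; exact ppR_le U f, ?_⟩
      by_cases hf0 : f = 0
      · simp [hf0, lp.coeFn_zero]
      · have hfpos : 0 < ‖f‖ := norm_pos_iff.mpr hf0
        set s := Real.sqrt (∑' u : U, ‖(f : ∀ _ : V, ℂ) u‖ ^ 2) with hs
        set y : P := ((‖f‖⁻¹ : ℝ) : ℂ) • ⟨f, hf⟩ with hy
        have hynorm : ‖y‖ = 1 := by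
          have hco : ‖(⟨f, hf⟩ : P)‖ = ‖f‖ := rfl
          rw [hy, norm_smul, Complex.norm_real, Real.norm_eq_abs,
            abs_of_nonneg (inv_nonneg.mpr (norm_nonneg f)), hco]
          exact inv_mul_cancel₀ hfpos.ne'
        have hmem : y ∈ Metric.sphere (0 : P) 1 := mem_sphere_zero_iff_norm.mpr hynorm
        have hmy : ‖T x‖ ≤ ‖T y‖ := hmin hmem
        have hTy : ‖T y‖ = ‖f‖⁻¹ * s := by
          have hTfs : ‖T (⟨f, hf⟩ : P)‖ = s := by rw [hT, ppR_norm]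
          rw [hy, map_smul, norm_smul, Complex.norm_real, Real.norm_eq_abs,
            abs_of_nonneg (inv_nonneg.mpr (norm_nonneg f)), hTfs]
        have key : ‖T x‖ * ‖f‖ ≤ s := by
          calc ‖T x‖ * ‖f‖ ≤ (‖f‖⁻¹ * s) * ‖f‖ := by
                rw [← hTy]; exact mul_le_mul_of_nonneg_right hmy (norm_nonneg f)
            _ = s := by field_simp
        have : ‖f‖ = ‖T x‖⁻¹ * (‖T x‖ * ‖f‖) := by field_simp
        rw [this]
        exact mul_le_mul_of_nonneg_left key (inv_nonneg.mpr hm.le)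
  · rintro ⟨C, hC, hPP⟩ f hf g hg hagree
    have hsub : f - g ∈ P := P.sub_mem hf hg
    have h0 : (∑' u : U, ‖((f - g : lp (fun _ : V => ℂ) 2) : ∀ _ : V, ℂ) u‖ ^ 2) = 0 := by
      have hz : ∀ u : U, ‖((f - g : lp (fun _ : V => ℂ) 2) : ∀ _ : V, ℂ) (u : V)‖ ^ 2 = 0 := by
        intro u
        rw [lp.coeFn_sub]
        simp [sub_eq_zero.mpr (hagree u u.2)]
      rw [tsum_congr hz, tsum_zero]
    obtain ⟨_, h2⟩ := hPP _ hsub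
    rw [h0, Real.sqrt_zero, mul_zero] at h2
    have hzero : f - g = 0 := norm_eq_zero.mp (le_antisymm h2 (norm_nonneg _))
    exact sub_eq_zero.mp hzero
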